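/- Let σ² > 0, P > 0, N₁ > 0, α₁ ∈ (0,1), ρ ∈ (0,1). The hybrid-coding distortion σ²(1-ρ²)/(1 + α₁P/N₁) + ρ²σ²/(1 + (1-α₁)P/(α₁P+N₁)) is strictly less than the separation (Scheme A) distortion σ²/(1 + α₁P/N₁) if and only if P/N₁ < (1 - 2α₁)/α₁². -/

import Mathlib

/-- Hybrid coding beats separation Scheme A iff P/N₁ < (1-2α₁)/α₁². -/
theorem stmt_3 (σ2 P N1 α1 ρ : ℝ) (hσ : 0 < σ2) (hP : 0 < P) (hN1 : 0 < N1)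
    (hα1 : α1 ∈ Set.Ioo (0:ℝ) 1) (hρ : ρ ∈ Set.Ioo (0:ℝ) 1) :
    σ2 * (1 - ρ^2) / (1 + α1 * P / N1)
        + ρ^2 * σ2 / (1 + (1 - α1) * P / (α1 * P + N1))
      < σ2 / (1 + α1 * P / N1)
    ↔ P / N1 < (1 - 2 * α1) / α1^2 := by
  obtain ⟨ha0, ha1⟩ := hα1
  obtain ⟨hr0, hr1⟩ := hρ
  have hd2 : 0 < α1 * P + N1 := by positivity
  have hd1 : 0 < 1 + α1 * P / N1 := by positivity
  have hd3 : 0 < 1 + (1 - α1) * P / (α1 * P + N1) := by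
    have : 0 ≤ (1 - α1) * P / (α1 * P + N1) := by
      apply div_nonneg (by nlinarith) hd2.le
    linarith
  have hN1' := hN1.ne'
  have hd2' := hd2.ne'
  have h4 : (0:ℝ) < N1 + α1 * P := by positivity
  have h5 : (0:ℝ) < α1 * P + N1 + (1 - α1) * P := by nlinarith
  have h4' := h4.ne'
  have h5' := h5.ne'
  constructor
  · intro h
    rw [div_lt_div_iff₀ hN1 (by positivity)]
    field_simp at h
    nlinarith [mul_pos (mul_pos hσ (mul_pos hr0 hr0)) (mul_pos hP h4),
      mul_pos hσ (mul_pos hr0 hr0), mul_pos hP h4, mul_pos h4 h4, mul_pos (mul_pos hr0 hr0) hP,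
      mul_pos (mul_pos hσ (mul_pos hr0 hr0)) h4]
  · intro h
    rw [div_lt_div_iff₀ hN1 (by positivity)] at h
    field_simp
    nlinarith [mul_pos (mul_pos hσ (mul_pos hr0 hr0)) (mul_pos hP h4),
      mul_pos hσ (mul_pos hr0 hr0), mul_pos hP h4, mul_pos (mul_pos hr0 hr0) hP,
      mul_pos (mul_pos hσ (mul_pos hr0 hr0)) h4]
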